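/- Let κ > 0 and let f : ℝ → ℝ be twice differentiable on [0, ∞) with f''(t) ≥ −2κ·f'(t) for every t ≥ 0, and suppose f(t) → 0 and f'(t) → 0 as t → ∞. Then f(t) ≤ e^{−2κt}·f(0) for every t ≥ 0. -/

import Mathlib

open Filter Set

/-- If `f` is twice differentiable on `[0, ∞)` with
`f'' ≥ −2κ f'` there, and `f (t) → 0`, `f' (t) → 0` as `t → ∞`, then
`f (t) ≤ e^{−2κt} f (0)` for all `t ≥ 0`.  Derivatives on `[0,∞)` are taken
as derivatives within `Set.Ici 0`. -/
theorem stmt4 (κ : ℝ) (hκ : 0 < κ) (f : ℝ → ℝ)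
    (hf : DifferentiableOn ℝ f (Ici (0:ℝ)))
    (hf' : DifferentiableOn ℝ (derivWithin f (Ici (0:ℝ))) (Ici (0:ℝ)))
    (hineq : ∀ t : ℝ, 0 ≤ t →
      derivWithin (derivWithin f (Ici (0:ℝ))) (Ici (0:ℝ)) t
        ≥ -(2*κ) * derivWithin f (Ici (0:ℝ)) t)
    (hlim : Tendsto f atTop (nhds 0))
    (hlim' : Tendsto (derivWithin f (Ici (0:ℝ))) atTop (nhds 0)) :
    ∀ t : ℝ, 0 ≤ t → f t ≤ Real.exp (-(2*κ) * t) * f 0 := by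
  set f' := derivWithin f (Ici (0:ℝ)) with hf'def
  set h : ℝ → ℝ := fun t => f' t + 2*κ * f t with hh
  -- h is monotone on Ici 0
  have hmono : MonotoneOn h (Ici (0:ℝ)) := by
    apply monotoneOn_of_hasDerivWithinAt_nonneg (f' := fun t =>
        derivWithin f' (Ici (0:ℝ)) t + 2*κ * f' t) (convex_Ici 0)
    · exact hf'.continuousOn.add (hf.continuousOn.const_smul (2*κ))
    · intro x hx
      rw [interior_Ici] at hx
      have hx' : x ∈ Ici (0:ℝ) := Set.mem_Ici.mpr (le_of_lt hx)
      have h1 := (hf' x hx').hasDerivWithinAt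
      have h2 := ((hf x hx').hasDerivWithinAt).const_mul (2*κ)
      exact (h1.add h2).mono interior_subset
    · intro x hx
      rw [interior_Ici] at hx
      have := hineq x (le_of_lt hx)
      nlinarith
  -- h tends to 0 at top
  have hhlim : Tendsto h atTop (nhds 0) := by
    have := hlim'.add (hlim.const_mul (2*κ))
    simpa using this
  -- h ≤ 0 on Ici 0
  have hle : ∀ t : ℝ, 0 ≤ t → h t ≤ 0 := by
    intro t ht
    refine ge_of_tendsto hhlim ?_
    filter_upwards [eventually_ge_atTop t] with s hs
    exact hmono ht (le_trans ht hs) hs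
  -- g = exp(2κ t) * f t is antitone on Ici 0
  set g : ℝ → ℝ := fun t => Real.exp (2*κ*t) * f t with hg
  have hanti : AntitoneOn g (Ici (0:ℝ)) := by
    apply antitoneOn_of_hasDerivWithinAt_nonpos (f' := fun t =>
        Real.exp (2*κ*t) * h t) (convex_Ici 0)
    · exact (Real.continuous_exp.comp (continuous_const.mul continuous_id)).continuousOn.mul
        hf.continuousOn
    · intro x hx
      rw [interior_Ici] at hx
      have hx' : x ∈ Ici (0:ℝ) := Set.mem_Ici.mpr (le_of_lt hx)
      have hexp : HasDerivAt (fun t => Real.exp (2*κ*t)) (Real.exp (2*κ*x) * (2*κ)) x := by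
        have := (Real.hasDerivAt_exp (2*κ*x)).comp x ((hasDerivAt_id x).const_mul (2*κ))
        simp [Function.comp] at this; exact this
      have hd := (hexp.hasDerivWithinAt.mul ((hf x hx').hasDerivWithinAt))
      have heq : Real.exp (2*κ*x) * (2*κ) * f x + Real.exp (2*κ*x) * f' x
          = Real.exp (2*κ*x) * h x := by simp [hh]; ring
      rw [heq] at hd
      exact hd.mono interior_subset
    · intro x hx
      rw [interior_Ici] at hx
      exact mul_nonpos_of_nonneg_of_nonpos (Real.exp_pos _).le (hle x hx.le)
  intro t ht
  have h0 : g t ≤ g 0 := hanti (Set.mem_Ici.mpr le_rfl) ht ht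
  have hgt : g 0 = f 0 := by simp [hg]
  rw [hgt] at h0
  have := mul_le_mul_of_nonneg_left h0 (Real.exp_pos (-(2*κ)*t)).le
  calc f t = Real.exp (-(2*κ)*t) * g t := by
        simp [hg, ← mul_assoc, ← Real.exp_add]
    _ ≤ Real.exp (-(2*κ)*t) * f 0 := this
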